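/- Let (W_j, Θ_j) and (W_j, Λ_j) both be gf-orthonormal bases for H with respect to {v_j}, and let V : H → H be the bounded operator V f = Σ_{j∈J} v_j² π_{W_j} Λ_j* Θ_j π_{W_j} f. Then V is unitary. -/

import Mathlib

open scoped InnerProductSpace
open ContinuousLinearMap

/-- The orthogonal projection of `H` onto the closed subspace `W j`, as a map `H →L[ℂ] H`. -/
noncomputable def gfProj {H : Type*} [NormedAddCommGroup H] [InnerProductSpace ℂ H]
    {J : Type*} (W : J → Submodule ℂ H) [∀ j, CompleteSpace (W j)] (j : J) : H →L[ℂ] H :=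
  (W j).subtypeL.comp ((W j).orthogonalProjectionOnto)

/-- if `(W_j, Θ_j)` and `(W_j, Λ_j)` are both gf-orthonormal bases w.r.t.
`{v_j}` and `V f = Σ_j v_j² π_{W_j} Λ_j* Θ_j π_{W_j} f`, then `V` is unitary. -/
theorem gf_orthonormal_bases_operator_unitary
    {H : Type*} [NormedAddCommGroup H] [InnerProductSpace ℂ H] [CompleteSpace H]
    {J : Type*} [Countable J]
    {Hs : J → Type*} [∀ j, NormedAddCommGroup (Hs j)] [∀ j, InnerProductSpace ℂ (Hs j)]
    [∀ j, CompleteSpace (Hs j)]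
    (W : J → Submodule ℂ H) [∀ j, CompleteSpace (W j)]
    (v : J → ℝ) (hv : ∀ j, 0 < v j)
    (Θ : ∀ j, H →L[ℂ] Hs j) (Λ : ∀ j, H →L[ℂ] Hs j)
    (hΘ_orth_eq : ∀ j (g g' : Hs j),
        ⟪v j • gfProj W j (adjoint (Θ j) g), v j • gfProj W j (adjoint (Θ j) g')⟫_ℂ
          = ⟪g, g'⟫_ℂ)
    (hΘ_orth_ne : ∀ i j, i ≠ j → ∀ (gi : Hs i) (gj : Hs j),
        ⟪v i • gfProj W i (adjoint (Θ i) gi), v j • gfProj W j (adjoint (Θ j) gj)⟫_ℂ = 0)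
    (hΘ_parseval : ∀ f : H,
        HasSum (fun j => (v j) ^ 2 * ‖Θ j (gfProj W j f)‖ ^ 2) (‖f‖ ^ 2))
    (hΛ_orth_eq : ∀ j (g g' : Hs j),
        ⟪v j • gfProj W j (adjoint (Λ j) g), v j • gfProj W j (adjoint (Λ j) g')⟫_ℂ
          = ⟪g, g'⟫_ℂ)
    (hΛ_orth_ne : ∀ i j, i ≠ j → ∀ (gi : Hs i) (gj : Hs j),
        ⟪v i • gfProj W i (adjoint (Λ i) gi), v j • gfProj W j (adjoint (Λ j) gj)⟫_ℂ = 0)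
    (hΛ_parseval : ∀ f : H,
        HasSum (fun j => (v j) ^ 2 * ‖Λ j (gfProj W j f)‖ ^ 2) (‖f‖ ^ 2))
    (V : H →L[ℂ] H)
    (hV : ∀ f : H,
        HasSum (fun j => ((v j) ^ 2 : ℝ) •
          gfProj W j (adjoint (Λ j) (Θ j (gfProj W j f)))) (V f)) :
    V.comp (adjoint V) = ContinuousLinearMap.id ℂ H ∧
    (adjoint V).comp V = ContinuousLinearMap.id ℂ H := by
  classical
  have hsmulL : ∀ (r : ℝ) (x y : H), ⟪r • x, y⟫_ℂ = (r : ℂ) * ⟪x, y⟫_ℂ := by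
    intro r x y
    rw [RCLike.real_smul_eq_coe_smul (K := ℂ), inner_smul_real_left]
    simp [Complex.real_smul]
  have hsmulR : ∀ (r : ℝ) (x y : H), ⟪x, r • y⟫_ℂ = (r : ℂ) * ⟪x, y⟫_ℂ := by
    intro r x y
    rw [RCLike.real_smul_eq_coe_smul (K := ℂ), inner_smul_real_right]
    simp [Complex.real_smul]
  have hproj : ∀ j (x y : H), ⟪gfProj W j x, y⟫_ℂ = ⟪x, gfProj W j y⟫_ℂ := by
    intro j x y
    exact (W j).inner_starProjection_left_eq_right x y
  have hselfH : ∀ x : H, ⟪x, x⟫_ℂ = ((‖x‖ ^ 2 : ℝ) : ℂ) := by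
    intro x
    apply Complex.ext
    · rw [Complex.ofReal_re, ← RCLike.re_to_complex]
      exact inner_self_eq_norm_sq x
    · rw [Complex.ofReal_im, ← RCLike.im_to_complex]
      exact inner_self_im x
  have hselfHs : ∀ (j : J) (x : Hs j), ⟪x, x⟫_ℂ = ((‖x‖ ^ 2 : ℝ) : ℂ) := by
    intro j x
    apply Complex.ext
    · rw [Complex.ofReal_re, ← RCLike.re_to_complex]
      exact inner_self_eq_norm_sq x
    · rw [Complex.ofReal_im, ← RCLike.im_to_complex]
      exact inner_self_im x
  set u : H → J → H := fun f j =>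
    ((v j) ^ 2 : ℝ) • gfProj W j (adjoint (Λ j) (Θ j (gfProj W j f))) with hu
  have hu_apply : ∀ (f : H) (j : J),
      u f j = ((v j) ^ 2 : ℝ) • gfProj W j (adjoint (Λ j) (Θ j (gfProj W j f))) :=
    fun _ _ => rfl
  have hVu : ∀ f : H, HasSum (u f) (V f) := fun f => hV f
  have hmap : ∀ (f x : H), HasSum (fun j => ⟪x, u f j⟫_ℂ) ⟪x, V f⟫_ℂ := by
    intro f x
    simpa only [innerSL_apply_apply] using (hVu f).mapL (innerSL ℂ x)
  have hu_left : ∀ (f : H) (j : J) (x : H),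
      ⟪u f j, x⟫_ℂ = ((v j : ℂ)) ^ 2 * ⟪Θ j (gfProj W j f), Λ j (gfProj W j x)⟫_ℂ := by
    intro f j x
    rw [hu_apply, hsmulL, hproj, adjoint_inner_left]
    push_cast
    ring
  have hu_right : ∀ (f : H) (j : J) (x : H),
      ⟪x, u f j⟫_ℂ = ((v j : ℂ)) ^ 2 * ⟪Λ j (gfProj W j x), Θ j (gfProj W j f)⟫_ℂ := by
    intro f j x
    rw [hu_apply, hsmulR, ← hproj, adjoint_inner_right]
    push_cast
    ring
  have hcross : ∀ (f f' : H) (i j : J), i ≠ j → ⟪u f i, u f' j⟫_ℂ = 0 := by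
    intro f f' i j hij
    have h0 := hΛ_orth_ne i j hij (Θ i (gfProj W i f)) (Θ j (gfProj W j f'))
    rw [hsmulL, hsmulR] at h0
    rw [hu_apply, hu_apply, hsmulL, hsmulR]
    push_cast
    linear_combination ((v i : ℂ) * (v j : ℂ)) * h0
  have hdiag : ∀ (f f' : H) (j : J),
      ⟪u f j, u f' j⟫_ℂ = ((v j : ℂ)) ^ 2 * ⟪Θ j (gfProj W j f), Θ j (gfProj W j f')⟫_ℂ := by
    intro f f' j
    have h0 := hΛ_orth_eq j (Θ j (gfProj W j f)) (Θ j (gfProj W j f'))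
    rw [hsmulL, hsmulR] at h0
    rw [hu_apply, hu_apply, hsmulL, hsmulR]
    push_cast
    linear_combination ((v j : ℂ)) ^ 2 * h0
  -- ⟪V f, V f⟫ = ‖f‖²
  have hVV_inner : ∀ f : H, ⟪V f, V f⟫_ℂ = ((‖f‖ ^ 2 : ℝ) : ℂ) := by
    intro f
    have h1 : HasSum (fun j => ⟪V f, u f j⟫_ℂ) ⟪V f, V f⟫_ℂ := hmap f (V f)
    have h2 : ∀ j, ⟪V f, u f j⟫_ℂ = (((v j) ^ 2 * ‖Θ j (gfProj W j f)‖ ^ 2 : ℝ) : ℂ) := by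
      intro j
      have hj : HasSum (fun i => ⟪u f j, u f i⟫_ℂ) ⟪u f j, V f⟫_ℂ := hmap f (u f j)
      have hj' : HasSum (fun i => ⟪u f j, u f i⟫_ℂ) ⟪u f j, u f j⟫_ℂ :=
        hasSum_single j (fun i hi => hcross f f j i (fun h => hi h.symm))
      have e1 : ⟪u f j, V f⟫_ℂ = ⟪u f j, u f j⟫_ℂ := hj.unique hj'
      calc ⟪V f, u f j⟫_ℂ = starRingEnd ℂ ⟪u f j, V f⟫_ℂ := (inner_conj_symm _ _).symm
        _ = starRingEnd ℂ ⟪u f j, u f j⟫_ℂ := by rw [e1]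
        _ = (((v j) ^ 2 * ‖Θ j (gfProj W j f)‖ ^ 2 : ℝ) : ℂ) := by
            rw [hdiag f f j, hselfHs j]
            simp only [map_mul, map_pow, Complex.conj_ofReal]
            push_cast
            ring
    have h1' : HasSum (fun j => (((v j) ^ 2 * ‖Θ j (gfProj W j f)‖ ^ 2 : ℝ) : ℂ))
        ⟪V f, V f⟫_ℂ := by
      simpa only [h2] using h1
    have h3 : HasSum (fun j => (((v j) ^ 2 * ‖Θ j (gfProj W j f)‖ ^ 2 : ℝ) : ℂ))
        ((‖f‖ ^ 2 : ℝ) : ℂ) := by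
      simpa only [Complex.ofRealCLM_apply] using (hΘ_parseval f).mapL Complex.ofRealCLM
    exact h1'.unique h3
  -- V is norm-preserving
  have hnorm : ∀ f : H, ‖V f‖ = ‖f‖ := by
    intro f
    have hre := inner_self_eq_norm_sq (𝕜 := ℂ) (V f)
    rw [hVV_inner f, RCLike.re_to_complex, Complex.ofReal_re] at hre
    have h' : ‖V f‖ ^ 2 = ‖f‖ ^ 2 := hre.symm
    nlinarith [norm_nonneg (V f), norm_nonneg f]
  -- adjoint V ∘ V = id
  have hadjV : (adjoint V).comp V = ContinuousLinearMap.id ℂ H := by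
    rw [← sub_eq_zero]
    have hz : ∀ x : H,
        ⟪((adjoint V).comp V - ContinuousLinearMap.id ℂ H) x, x⟫_ℂ = 0 := by
      intro x
      simp only [sub_apply, comp_apply, coe_id', id_eq, inner_sub_left, adjoint_inner_left]
      rw [hVV_inner x, hselfH x]
      exact sub_self _
    have h0 := (inner_map_self_eq_zero
      (((adjoint V).comp V - ContinuousLinearMap.id ℂ H : H →L[ℂ] H) : H →ₗ[ℂ] H)).mp hz
    ext x
    have hx := LinearMap.congr_fun h0 x
    simpa using hx
  -- any f orthogonal to the range of V is zero
  have hperp : ∀ f : H, (∀ g : H, ⟪f, V g⟫_ℂ = 0) → f = 0 := by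
    intro f hf
    have hLam : ∀ k, Λ k (gfProj W k f) = 0 := by
      intro k
      apply ext_inner_right ℂ
      intro h
      rw [inner_zero_left]
      set g : H := v k • gfProj W k (adjoint (Θ k) h) with hg
      have hvk : (v k : ℂ) ≠ 0 := by exact_mod_cast (hv k).ne'
      have hterm : ∀ (j : J) (x : H), ⟪Θ j (gfProj W j g), Λ j (gfProj W j x)⟫_ℂ
          = ⟪g, gfProj W j (adjoint (Θ j) (Λ j (gfProj W j x)))⟫_ℂ := by
        intro j x
        rw [← adjoint_inner_right, hproj]
      have hgb : ∀ (j : J) (y : Hs j), j ≠ k →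
          ⟪g, gfProj W j (adjoint (Θ j) y)⟫_ℂ = 0 := by
        intro j y hjk
        have h0 := hΘ_orth_ne k j (fun hh => hjk hh.symm) h y
        rw [hsmulR] at h0
        have hvj : (v j : ℂ) ≠ 0 := by exact_mod_cast (hv j).ne'
        rw [hg]
        exact (mul_eq_zero.mp h0).resolve_left hvj
      have hgk : ∀ y : Hs k, ⟪g, gfProj W k (adjoint (Θ k) y)⟫_ℂ
          = ((v k : ℂ))⁻¹ * ⟪h, y⟫_ℂ := by
        intro y
        have h0 := hΘ_orth_eq k h y
        rw [hsmulR] at h0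
        rw [hg]
        apply mul_left_cancel₀ hvk
        rw [h0, ← mul_assoc, mul_inv_cancel₀ hvk, one_mul]
      have hsum : HasSum (fun j => ⟪f, u g j⟫_ℂ) ⟪f, V g⟫_ℂ := hmap g f
      have hne : ∀ j, j ≠ k → ⟪f, u g j⟫_ℂ = 0 := by
        intro j hjk
        rw [← inner_conj_symm, hu_left g j f, hterm j f, hgb j _ hjk, mul_zero, map_zero]
      have hsum' : HasSum (fun j => ⟪f, u g j⟫_ℂ) ⟪f, u g k⟫_ℂ := hasSum_single k hne
      have e1 : ⟪f, u g k⟫_ℂ = 0 := by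
        rw [← hsum.unique hsum']
        exact hf g
      have e1' : ⟪u g k, f⟫_ℂ = 0 := by
        rw [← inner_conj_symm, e1, map_zero]
      rw [hu_left g k f, hterm k f, hgk] at e1'
      have h5 : ⟪h, Λ k (gfProj W k f)⟫_ℂ = 0 := by
        have hvk2 : ((v k : ℂ)) ^ 2 ≠ 0 := pow_ne_zero _ hvk
        have hvki : ((v k : ℂ))⁻¹ ≠ 0 := inv_ne_zero hvk
        rcases mul_eq_zero.mp e1' with h6 | h6
        · exact absurd h6 hvk2
        · rcases mul_eq_zero.mp h6 with h7 | h7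
          · exact absurd h7 hvki
          · exact h7
      rw [← inner_conj_symm, h5, map_zero]
    have h0 : HasSum (fun j => (v j) ^ 2 * ‖Λ j (gfProj W j f)‖ ^ 2) 0 := by
      have he : (fun j => (v j) ^ 2 * ‖Λ j (gfProj W j f)‖ ^ 2) = fun _ => (0 : ℝ) :=
        funext fun j => by rw [hLam j]; simp
      rw [he]
      exact hasSum_zero
    have hf0 : ‖f‖ ^ 2 = 0 := (hΛ_parseval f).unique h0
    have hfn : ‖f‖ = 0 := by nlinarith [norm_nonneg f]
    exact norm_eq_zero.mp hfn
  -- V is surjective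
  have hsurj : Function.Surjective V := by
    have hiso : Isometry V := AddMonoidHomClass.isometry_of_norm V hnorm
    have hKc : IsClosed ((LinearMap.range (V : H →ₗ[ℂ] H) : Submodule ℂ H) : Set H) := by
      have h1 : IsClosed (Set.range V) := hiso.isClosedEmbedding.isClosed_range
      simpa [LinearMap.coe_range] using h1
    haveI : CompleteSpace (LinearMap.range (V : H →ₗ[ℂ] H) : Submodule ℂ H) := hKc.completeSpace_coe
    have hKbot : (LinearMap.range (V : H →ₗ[ℂ] H) : Submodule ℂ H)ᗮ = ⊥ := by
      rw [Submodule.eq_bot_iff]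
      intro f hfmem
      apply hperp f
      intro g
      have hmem := (Submodule.mem_orthogonal _ f).mp hfmem (V g) ⟨g, rfl⟩
      rw [← inner_conj_symm, hmem, map_zero]
    have hK : (LinearMap.range (V : H →ₗ[ℂ] H) : Submodule ℂ H) = ⊤ :=
      Submodule.orthogonal_eq_bot_iff.mp hKbot
    exact LinearMap.range_eq_top.mp hK
  refine ⟨?_, hadjV⟩
  ext x
  obtain ⟨y, rfl⟩ := hsurj x
  have hy := DFunLike.congr_fun hadjV y
  simp only [comp_apply, coe_id', id_eq] at hy ⊢
  rw [hy]
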